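/- (Honeycomb example: multiplicities in the diffraction pattern, via S₃-symmetry.) Let W(u_1, u_2) = (u_1 + u_2 + 1)(u_1^{−1} + u_2^{−1} + 1) and for N ≥ 1 and r ∈ ℂ set mult_N(r) = #{(ζ_1, ζ_2) ∈ μ_N × μ_N : W(ζ_1, ζ_2) = r}, where μ_N ⊂ ℂ^× is the group of N-th roots of unity. Then for every N ≥ 1: (i) mult_N(9) = 1; (ii) if 3 divides N then mult_N(0) = 2; (iii) if 2 divides N then mult_N(1) ≡ 3 (mod 6); and (iv) for every r ∉ {0, 1, 9}, mult_N(r) ≡ 0 (mod 6). -/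

import Mathlib

open scoped BigOperators

lemma iterate_mem {α : Type*} (g : α → α) (F : Finset α) (hg : ∀ x ∈ F, g x ∈ F) :
    ∀ (n : ℕ) (x : α), x ∈ F → g^[n] x ∈ F := by
  intro n
  induction n with
  | zero => intro x hx; simpa using hx
  | succ n ih =>
    intro x hx
    rw [Function.iterate_succ_apply]
    exact ih _ (hg x hx)

lemma six_dvd_aux {α : Type*} [DecidableEq α] (g : α → α) :
    ∀ (n : ℕ) (F : Finset α), (∀ x ∈ F, g x ∈ F) → (∀ x ∈ F, g^[6] x = x) →
      (∀ x ∈ F, ∀ d : ℕ, 1 ≤ d → d ≤ 5 → g^[d] x ≠ x) → F.card = n → 6 ∣ F.card := by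
  intro n
  induction n using Nat.strong_induction_on with
  | _ n ih =>
  intro F hg h6 key hcard
  rcases F.eq_empty_or_nonempty with rfl | ⟨x, hx⟩
  · simp
  · set O : Finset α := (Finset.range 6).image (fun i => g^[i] x) with hO
    have hinj0 : ∀ i j : ℕ, i < 6 → j < 6 → i < j → g^[i] x = g^[j] x → False := by
      intro i j hi hj hlt hij
      have heq : g^[6 - j + i] x = x := by
        have h' := congrArg (g^[6 - j]) hij
        rw [← Function.iterate_add_apply, ← Function.iterate_add_apply] at h'
        rw [show 6 - j + j = 6 by omega] at h'
        rw [h', h6 x hx]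
      exact key x hx (6 - j + i) (by omega) (by omega) heq
    have hinj : ∀ i ∈ Finset.range 6, ∀ j ∈ Finset.range 6,
        g^[i] x = g^[j] x → i = j := by
      intro i hi j hj hij
      simp only [Finset.mem_range] at hi hj
      rcases lt_trichotomy i j with h | h | h
      · exact absurd hij (fun hh => hinj0 i j hi hj h hh)
      · exact h
      · exact absurd hij.symm (fun hh => hinj0 j i hj hi h hh)
    have hOcard : O.card = 6 := by
      rw [hO, Finset.card_image_of_injOn, Finset.card_range]
      intro i hi j hj h
      exact hinj i (by simpa using hi) j (by simpa using hj) h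
    have hOF : O ⊆ F := by
      intro y hy
      rw [hO] at hy
      simp only [Finset.mem_image, Finset.mem_range] at hy
      obtain ⟨i, _, rfl⟩ := hy
      exact iterate_mem g F hg i x hx
    have hOg : ∀ y ∈ F, g y ∈ O → y ∈ O := by
      intro y hy hgy
      simp only [hO, Finset.mem_image, Finset.mem_range] at hgy ⊢
      obtain ⟨i, hi, hgi⟩ := hgy
      have h' : g^[5] (g y) = g^[5] (g^[i] x) := by rw [hgi]
      rw [← Function.iterate_succ_apply, ← Function.iterate_add_apply] at h'
      have h'' : g^[6] y = g^[5 + i] x := h'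
      rw [h6 y hy] at h''
      by_cases hii : 5 + i < 6
      · exact ⟨5 + i, hii, h''.symm⟩
      · refine ⟨5 + i - 6, by omega, ?_⟩
        have h3' : g^[5 + i] x = g^[5 + i - 6] (g^[6] x) := by
          rw [← Function.iterate_add_apply]
          congr 1
          omega
        rw [h3', h6 x hx] at h''
        exact h''.symm
    -- now remove O
    set F' : Finset α := F \ O with hF'
    have hsub : F' ⊆ F := Finset.sdiff_subset
    have hg' : ∀ y ∈ F', g y ∈ F' := by
      intro y hy
      rw [hF', Finset.mem_sdiff] at hy ⊢
      refine ⟨hg y hy.1, fun h => hy.2 (hOg y hy.1 h)⟩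
    have hcard' : F'.card = F.card - 6 := by
      rw [hF', Finset.card_sdiff_of_subset hOF, hOcard]
    have hlt : F'.card < n := by
      have h6le : 6 ≤ F.card := hOcard ▸ Finset.card_le_card hOF
      omega
    have := ih F'.card hlt F' hg' (fun y hy => h6 y (hsub hy))
      (fun y hy => key y (hsub hy)) rfl
    have h6le : 6 ≤ F.card := hOcard ▸ Finset.card_le_card hOF
    omega

lemma six_dvd_card {α : Type*} [DecidableEq α] (g : α → α) (F : Finset α)
    (hg : ∀ x ∈ F, g x ∈ F)
    (h6 : ∀ x ∈ F, g^[6] x = x)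
    (h2 : ∀ x ∈ F, g (g x) ≠ x)
    (h3 : ∀ x ∈ F, g (g (g x)) ≠ x) :
    6 ∣ F.card := by
  refine six_dvd_aux g F.card F hg h6 ?_ rfl
  intro x hx d h1 h5 hd
  have e2 : ¬ g^[2] x = x := h2 x hx
  have e3 : ¬ g^[3] x = x := h3 x hx
  have e1 : g^[1] x = x → False := by
    intro h
    exact e2 (by rw [show (2:ℕ) = 1 + 1 from rfl, Function.iterate_add_apply, h]; exact h)
  have e4 : g^[4] x = x → False := by
    intro h
    apply e2
    have h' : g^[2] (g^[4] x) = g^[2] x := by rw [h]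
    rw [← Function.iterate_add_apply] at h'
    rw [← h', show (2+4:ℕ) = 6 from rfl, h6 x hx]
  have e5 : g^[5] x = x → False := by
    intro h
    apply e1
    have h' : g^[1] (g^[5] x) = g^[1] x := by rw [h]
    rw [← Function.iterate_add_apply] at h'
    rw [← h', show (1+5:ℕ) = 6 from rfl, h6 x hx]
  interval_cases d
  · exact e1 hd
  · exact e2 hd
  · exact e3 hd
  · exact e4 hd
  · exact e5 hd

/-- The honeycomb function `W(u₁, u₂) = (u₁ + u₂ + 1)(u₁⁻¹ + u₂⁻¹ + 1)`. -/
noncomputable def Whc (u₁ u₂ : ℂ) : ℂ := (u₁ + u₂ + 1) * (u₁⁻¹ + u₂⁻¹ + 1)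

noncomputable def ghc (p : ℂ × ℂ) : ℂ × ℂ := (p.1 * p.2⁻¹, p.1)

lemma root_ne_zero {N : ℕ} (hN : N ≠ 0) {u : ℂ} (hu : u ^ N = 1) : u ≠ 0 := by
  intro h
  rw [h, zero_pow hN] at hu
  exact zero_ne_one hu

lemma root_abs {N : ℕ} (hN : N ≠ 0) {u : ℂ} (hu : u ^ N = 1) : ‖u‖ = 1 := by
  have h1 : ‖u‖ ^ N = 1 := by
    rw [← norm_pow, hu, norm_one]
  have h0 : 0 ≤ ‖u‖ := norm_nonneg u
  rcases pow_eq_one_iff_cases.mp h1 with h | h | h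
  · exact absurd h hN
  · exact h
  · nlinarith [h.1]

lemma root_conj {N : ℕ} (hN : N ≠ 0) {u : ℂ} (hu : u ^ N = 1) :
    (starRingEnd ℂ) u = u⁻¹ := (Complex.inv_eq_conj (root_abs hN hu)).symm

lemma whc_ghc {u v : ℂ} (hu : u ≠ 0) (hv : v ≠ 0) :
    Whc (u * v⁻¹) u = Whc u v := by
  unfold Whc
  field_simp
  ring

lemma ghc_cube {u v : ℂ} (hu : u ≠ 0) (hv : v ≠ 0) :
    ghc (ghc (ghc (u, v))) = (u⁻¹, v⁻¹) := by
  unfold ghc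
  simp only
  refine Prod.ext ?_ ?_
  · field_simp
  · field_simp

lemma ghc_sq_fix {u v : ℂ} (hu : u ≠ 0) (hv : v ≠ 0)
    (h : ghc (ghc (u, v)) = (u, v)) : Whc u v = 9 ∨ Whc u v = 0 := by
  have h1 : u * v⁻¹ * u⁻¹ = u := congrArg Prod.fst h
  have h2 : u * v⁻¹ = v := congrArg Prod.snd h
  have hu2 : u = v ^ 2 := by
    field_simp at h2
    linear_combination h2
  have hv3 : v ^ 3 = 1 := by
    rw [hu2] at h1
    have hv2 : (v:ℂ)^2 ≠ 0 := pow_ne_zero 2 hv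
    field_simp at h1
    linear_combination -h1
  have hW : Whc u v = (v^2 + v + 1)^2 := by
    have hi1 : v⁻¹ = v^2 := inv_eq_of_mul_eq_one_left (by linear_combination hv3)
    have hi2 : (v^2)⁻¹ = v := inv_eq_of_mul_eq_one_left (by linear_combination hv3)
    rw [hu2]
    unfold Whc
    rw [hi1, hi2]
    ring
  by_cases hv1 : v = 1
  · left; rw [hW, hv1]; norm_num
  · right
    have : v^2 + v + 1 = 0 := by
      have hf : (v - 1) * (v^2 + v + 1) = 0 := by linear_combination hv3
      rcases mul_eq_zero.mp hf with h | h
      · exact absurd (by linear_combination h) hv1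
      · exact h
    rw [hW, this]
    ring

lemma ghc_cube_fix {u v : ℂ} (hu : u ≠ 0) (hv : v ≠ 0)
    (h : ghc (ghc (ghc (u, v))) = (u, v)) :
    (u = 1 ∨ u = -1) ∧ (v = 1 ∨ v = -1) := by
  rw [ghc_cube hu hv] at h
  have h1 : u⁻¹ = u := congrArg Prod.fst h
  have h2 : v⁻¹ = v := congrArg Prod.snd h
  constructor
  · have : (u - 1) * (u + 1) = 0 := by
      field_simp at h1
      linear_combination -h1
    rcases mul_eq_zero.mp this with h | h
    · left; linear_combination h
    · right; linear_combination h
  · have : (v - 1) * (v + 1) = 0 := by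
      field_simp at h2
      linear_combination -h2
    rcases mul_eq_zero.mp this with h | h
    · left; linear_combination h
    · right; linear_combination h

lemma whc_11 : Whc 1 1 = 9 := by norm_num [Whc]
lemma whc_1m : Whc 1 (-1) = 1 := by norm_num [Whc]
lemma whc_m1 : Whc (-1) 1 = 1 := by norm_num [Whc]
lemma whc_mm : Whc (-1) (-1) = 1 := by norm_num [Whc]

lemma re_eq_one {u : ℂ} (habs : ‖u‖ = 1) (hre : u.re = 1) : u = 1 := by
  have hn : Complex.normSq u = 1 := by
    rw [← Complex.sq_norm, habs]; norm_num
  rw [Complex.normSq_apply, hre] at hn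
  have him : u.im = 0 := by nlinarith
  exact Complex.ext (by simp [hre]) (by simp [him])

lemma nine_case {N : ℕ} (hN : N ≠ 0) {u v : ℂ} (hu : u ^ N = 1) (hv : v ^ N = 1)
    (h : Whc u v = 9) : u = 1 ∧ v = 1 := by
  have hu0 : u ≠ 0 := root_ne_zero hN hu
  have hv0 : v ≠ 0 := root_ne_zero hN hv
  set a : ℂ := u * v⁻¹ with ha
  have haN : a ^ N = 1 := by
    rw [ha, mul_pow, inv_pow, hu, hv]; norm_num
  have ha0 : a ≠ 0 := root_ne_zero hN haN
  have key : Whc u v = 3 + (u + (starRingEnd ℂ) u) + (v + (starRingEnd ℂ) v)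
      + (a + (starRingEnd ℂ) a) := by
    rw [root_conj hN hu, root_conj hN hv, root_conj hN haN, ha]
    unfold Whc
    field_simp
    ring
  rw [key] at h
  rw [Complex.add_conj, Complex.add_conj, Complex.add_conj] at h
  have hre : u.re + v.re + a.re = 3 := by
    have := congrArg Complex.re h
    simp [Complex.add_re, Complex.ofReal_re] at this
    linarith
  have b1 : u.re ≤ 1 := by
    calc u.re ≤ ‖u‖ := Complex.re_le_norm u
    _ = 1 := root_abs hN hu
  have b2 : v.re ≤ 1 := by
    calc v.re ≤ ‖v‖ := Complex.re_le_norm v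
    _ = 1 := root_abs hN hv
  have b3 : a.re ≤ 1 := by
    calc a.re ≤ ‖a‖ := Complex.re_le_norm a
    _ = 1 := root_abs hN haN
  exact ⟨re_eq_one (root_abs hN hu) (by linarith),
    re_eq_one (root_abs hN hv) (by linarith)⟩

lemma zero_case {N : ℕ} (hN : N ≠ 0) {u v : ℂ} (hu : u ^ N = 1) (hv : v ^ N = 1)
    (h : u + v + 1 = 0) : u ^ 2 + u + 1 = 0 ∧ v = u ^ 2 := by
  have hu0 : u ≠ 0 := root_ne_zero hN hu
  have hv0 : v ≠ 0 := root_ne_zero hN hv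
  have hc : u⁻¹ + v⁻¹ + 1 = 0 := by
    have := congrArg (starRingEnd ℂ) h
    simpa [map_add, root_conj hN hu, root_conj hN hv] using this
  have hc' : v + u + u * v = 0 := by
    field_simp at hc
    linear_combination hc
  have h1 : u ^ 2 + u + 1 = 0 := by linear_combination (u + 1) * h - hc'
  exact ⟨h1, by linear_combination h - h1⟩

noncomputable def zhc : ℂ := (-1 + Complex.I * (Real.sqrt 3 : ℝ)) / 2

lemma zhc_eq : zhc ^ 2 + zhc + 1 = 0 := by
  have h3 : ((Real.sqrt 3 : ℝ) : ℂ) ^ 2 = 3 := by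
    rw [← Complex.ofReal_pow]
    norm_num [Real.sq_sqrt]
  have hI : Complex.I ^ 2 = -1 := Complex.I_sq
  unfold zhc
  linear_combination (Complex.I ^ 2 / 4) * h3 + (3 / 4 : ℂ) * hI

lemma zhc_cube : zhc ^ 3 = 1 := by linear_combination (zhc - 1) * zhc_eq

lemma zhc_ne_one : zhc ≠ 1 := by
  intro h
  have := zhc_eq
  rw [h] at this
  norm_num at this

lemma zhc_ne_zero : zhc ≠ 0 := by
  intro h
  have := zhc_eq
  rw [h] at this
  norm_num at this

lemma zhc_sq_ne : zhc ^ 2 ≠ zhc := by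
  intro h
  have hf : zhc * (zhc - 1) = 0 := by linear_combination h
  rcases mul_eq_zero.mp hf with h' | h'
  · exact zhc_ne_zero h'
  · exact zhc_ne_one (by linear_combination h')

lemma root_quadratic {u : ℂ} (hu : u ^ 2 + u + 1 = 0) : u = zhc ∨ u = zhc ^ 2 := by
  have hf : (u - zhc) * (u - zhc ^ 2) = 0 := by
    linear_combination hu - u * zhc_eq + zhc_cube
  rcases mul_eq_zero.mp hf with h | h
  · left; linear_combination h
  · right; linear_combination h

lemma zhc_inv : zhc⁻¹ = zhc ^ 2 :=
  inv_eq_of_mul_eq_one_left (by linear_combination zhc_cube)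

lemma zhc_sq_inv : (zhc ^ 2)⁻¹ = zhc :=
  inv_eq_of_mul_eq_one_left (by linear_combination zhc_cube)

lemma ghc_iter3 (p : ℂ × ℂ) : ghc^[3] p = ghc (ghc (ghc p)) := rfl

lemma ghc_six {u v : ℂ} (hu : u ≠ 0) (hv : v ≠ 0) : ghc^[6] (u, v) = (u, v) := by
  have h : ghc^[6] (u, v) = ghc^[3] (ghc^[3] (u, v)) := by
    rw [← Function.iterate_add_apply]
  rw [h, ghc_iter3, ghc_iter3, ghc_cube hu hv,
    ghc_cube (inv_ne_zero hu) (inv_ne_zero hv), inv_inv, inv_inv]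

lemma ghc_inj {u v u' v' : ℂ} (hu : u ≠ 0)
    (h : ghc (u, v) = ghc (u', v')) : (u, v) = (u', v') := by
  have h1 : u * v⁻¹ = u' * v'⁻¹ := congrArg Prod.fst h
  have h2 : u = u' := congrArg Prod.snd h
  subst h2
  have h3 : v⁻¹ = v'⁻¹ := mul_left_cancel₀ hu h1
  rw [inv_inj.mp h3]

lemma part_three (N : ℕ) (hN0 : N ≠ 0) (hm1 : (-1 : ℂ) ^ N = 1) (F : Finset (ℂ × ℂ))
    (hmemF : ∀ p : ℂ × ℂ, p ∈ F ↔ (p.1 ^ N = 1 ∧ p.2 ^ N = 1) ∧ Whc p.1 p.2 = 1) :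
    F.card % 6 = 3 % 6 := by
  classical
  set A : Finset (ℂ × ℂ) := {(-1, -1), (-1, 1), (1, -1)} with hA
  have hmemA : ∀ p : ℂ × ℂ,
      p ∈ A ↔ p = (-1, -1) ∨ p = (-1, 1) ∨ p = (1, -1) := by
    intro p; simp [hA]
  have hAsub : A ⊆ F := by
    intro p hp
    rcases (hmemA p).mp hp with rfl | rfl | rfl
    · exact (hmemF _).mpr ⟨⟨hm1, hm1⟩, whc_mm⟩
    · exact (hmemF _).mpr ⟨⟨hm1, one_pow N⟩, whc_m1⟩
    · exact (hmemF _).mpr ⟨⟨one_pow N, hm1⟩, whc_1m⟩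
  have hAcard : A.card = 3 := by
    rw [hA, Finset.card_insert_of_notMem (by norm_num),
      Finset.card_insert_of_notMem (by norm_num), Finset.card_singleton]
  have hdvd : 6 ∣ (F \ A).card := by
    apply six_dvd_card ghc
    · rintro ⟨u, v⟩ hx
      rw [Finset.mem_sdiff] at hx ⊢
      obtain ⟨hxF, hxA⟩ := hx
      obtain ⟨⟨hu, hv⟩, hW⟩ := (hmemF _).mp hxF
      have hu0 : u ≠ 0 := root_ne_zero hN0 hu
      have hv0 : v ≠ 0 := root_ne_zero hN0 hv
      constructor
      · refine (hmemF _).mpr ⟨⟨?_, hu⟩, ?_⟩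
        · show (u * v⁻¹) ^ N = 1
          rw [mul_pow, inv_pow, hu, hv]; norm_num
        · show Whc (u * v⁻¹) u = 1
          rw [whc_ghc hu0 hv0]; exact hW
      · intro hgA
        apply hxA
        rcases (hmemA _).mp hgA with hg | hg | hg
        · have he : (u, v) = ((-1 : ℂ), (1 : ℂ)) :=
            ghc_inj hu0 (by rw [hg]; show ((-1:ℂ), (-1:ℂ)) = ghc (-1, 1); unfold ghc; norm_num)
          rw [he]; exact (hmemA _).mpr (Or.inr (Or.inl rfl))
        · have he : (u, v) = ((1 : ℂ), (-1 : ℂ)) :=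
            ghc_inj hu0 (by rw [hg]; show ((-1:ℂ), (1:ℂ)) = ghc (1, -1); unfold ghc; norm_num)
          rw [he]; exact (hmemA _).mpr (Or.inr (Or.inr rfl))
        · have he : (u, v) = ((-1 : ℂ), (-1 : ℂ)) :=
            ghc_inj hu0 (by rw [hg]; show ((1:ℂ), (-1:ℂ)) = ghc (-1, -1); unfold ghc; norm_num)
          rw [he]; exact (hmemA _).mpr (Or.inl rfl)
    · rintro ⟨u, v⟩ hx
      obtain ⟨⟨hu, hv⟩, hW⟩ := (hmemF _).mp (Finset.mem_sdiff.mp hx).1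
      exact ghc_six (root_ne_zero hN0 hu) (root_ne_zero hN0 hv)
    · rintro ⟨u, v⟩ hx heq
      obtain ⟨⟨hu, hv⟩, hW⟩ := (hmemF _).mp (Finset.mem_sdiff.mp hx).1
      rcases ghc_sq_fix (root_ne_zero hN0 hu) (root_ne_zero hN0 hv) heq with h | h <;>
        rw [hW] at h <;> norm_num at h
    · rintro ⟨u, v⟩ hx heq
      have hx' := Finset.mem_sdiff.mp hx
      obtain ⟨⟨hu, hv⟩, hW⟩ := (hmemF _).mp hx'.1
      obtain ⟨hu1, hv1⟩ := ghc_cube_fix (root_ne_zero hN0 hu) (root_ne_zero hN0 hv) heq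
      apply hx'.2
      rcases hu1 with rfl | rfl <;> rcases hv1 with rfl | rfl
      · rw [whc_11] at hW; norm_num at hW
      · exact (hmemA _).mpr (Or.inr (Or.inr rfl))
      · exact (hmemA _).mpr (Or.inr (Or.inl rfl))
      · exact (hmemA _).mpr (Or.inl rfl)
  have hcards : (F \ A).card + A.card = F.card := Finset.card_sdiff_add_card_eq_card hAsub
  omega


open scoped Classical in
/-- `mult_N(r) = #{(ζ₁, ζ₂) ∈ μ_N × μ_N : W(ζ₁, ζ₂) = r}`. -/
noncomputable def multN (N : ℕ) (r : ℂ) : ℕ :=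
  ((Polynomial.nthRootsFinset N (1 : ℂ) ×ˢ Polynomial.nthRootsFinset N (1 : ℂ)).filter
    (fun p => Whc p.1 p.2 = r)).card

/-- Honeycomb example, multiplicities in the diffraction pattern via the `S₃`-symmetry:
for every `N ≥ 1`: (i) `mult_N(9) = 1`; (ii) if `3 ∣ N` then `mult_N(0) = 2`;
(iii) if `2 ∣ N` then `mult_N(1) ≡ 3 (mod 6)`; (iv) `mult_N(r) ≡ 0 (mod 6)` for
`r ∉ {0, 1, 9}`. -/
theorem honeycomb_multiplicities (N : ℕ) (hN : 1 ≤ N) :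
    multN N 9 = 1 ∧
    (3 ∣ N → multN N 0 = 2) ∧
    (2 ∣ N → multN N 1 ≡ 3 [MOD 6]) ∧
    (∀ r : ℂ, r ∉ ({0, 1, 9} : Set ℂ) → multN N r ≡ 0 [MOD 6]) := by
  classical
  have hN0 : N ≠ 0 := by omega
  have hNpos : 0 < N := hN
  have hmem : ∀ x : ℂ, x ∈ Polynomial.nthRootsFinset N (1 : ℂ) ↔ x ^ N = 1 :=
    fun x => Polynomial.mem_nthRootsFinset hNpos 1
  -- generic facts used several times
  refine ⟨?_, ?_, ?_, ?_⟩
  · -- (i)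
    unfold multN
    rw [Finset.card_eq_one]
    refine ⟨((1 : ℂ), (1 : ℂ)), ?_⟩
    apply Finset.ext
    rintro ⟨u, v⟩
    simp only [Finset.mem_filter, Finset.mem_product, Finset.mem_singleton, hmem,
      Prod.mk.injEq]
    constructor
    · rintro ⟨⟨hu, hv⟩, hW⟩
      exact nine_case hN0 hu hv hW
    · rintro ⟨rfl, rfl⟩
      exact ⟨⟨one_pow N, one_pow N⟩, whc_11⟩
  · -- (ii)
    intro h3
    obtain ⟨k, hk⟩ := h3
    have hzN : zhc ^ N = 1 := by
      rw [hk, pow_mul, zhc_cube, one_pow]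
    have hz2N : (zhc ^ 2) ^ N = 1 := by
      rw [← pow_mul, mul_comm 2 N, pow_mul, hzN, one_pow]
    unfold multN
    rw [Finset.card_eq_two]
    refine ⟨(zhc, zhc ^ 2), (zhc ^ 2, zhc), ?_, ?_⟩
    · intro h
      exact zhc_sq_ne (congrArg Prod.fst h).symm
    · apply Finset.ext
      rintro ⟨u, v⟩
      simp only [Finset.mem_filter, Finset.mem_product, Finset.mem_insert,
        Finset.mem_singleton, hmem, Prod.mk.injEq]
      constructor
      · rintro ⟨⟨hu, hv⟩, hW⟩
        unfold Whc at hW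
        rcases mul_eq_zero.mp hW with hA | hB
        · obtain ⟨hq, hv2⟩ := zero_case hN0 hu hv hA
          rcases root_quadratic hq with rfl | hu2
          · left; exact ⟨rfl, hv2⟩
          · right
            refine ⟨hu2, ?_⟩
            rw [hv2, hu2]
            linear_combination zhc * zhc_cube
        · have huN : (u⁻¹) ^ N = 1 := by rw [inv_pow, hu, inv_one]
          have hvN : (v⁻¹) ^ N = 1 := by rw [inv_pow, hv, inv_one]
          obtain ⟨hq, hv2⟩ := zero_case hN0 huN hvN hB
          have hvv : v = ((u⁻¹) ^ 2)⁻¹ := by rw [← hv2, inv_inv]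
          rcases root_quadratic hq with hu2 | hu2
          · right
            have hu' : u = zhc ^ 2 := by rw [← inv_inv u, hu2, zhc_inv]
            refine ⟨hu', ?_⟩
            rw [hvv, hu2, zhc_sq_inv]
          · left
            have hu' : u = zhc := by rw [← inv_inv u, hu2, zhc_sq_inv]
            refine ⟨hu', ?_⟩
            rw [hvv, hu2,
              show ((zhc ^ 2) ^ 2 : ℂ) = zhc from by linear_combination zhc * zhc_cube,
              zhc_inv]
      · have hW1 : Whc zhc (zhc ^ 2) = 0 := by
          unfold Whc
          rw [show zhc + zhc ^ 2 + 1 = (0 : ℂ) by linear_combination zhc_eq, zero_mul]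
        have hW2 : Whc (zhc ^ 2) zhc = 0 := by
          unfold Whc
          rw [show zhc ^ 2 + zhc + 1 = (0 : ℂ) by linear_combination zhc_eq, zero_mul]
        rintro (⟨rfl, rfl⟩ | ⟨rfl, rfl⟩)
        · exact ⟨⟨hzN, hz2N⟩, hW1⟩
        · exact ⟨⟨hz2N, hzN⟩, hW2⟩
  · -- (iii)
    intro h2d
    obtain ⟨k, hk⟩ := h2d
    have hm1 : (-1 : ℂ) ^ N = 1 := by
      rw [hk, pow_mul]; norm_num
    unfold multN
    show _ % 6 = 3 % 6
    apply part_three N hN0 hm1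
    rintro ⟨u, v⟩
    simp only [Finset.mem_filter, Finset.mem_product, hmem]
  · -- (iv)
    intro r hr
    simp only [Set.mem_insert_iff, Set.mem_singleton_iff, not_or] at hr
    obtain ⟨hr0, hr1, hr9⟩ := hr
    have hdvd : 6 ∣ multN N r := by
      unfold multN
      apply six_dvd_card ghc
      · rintro ⟨u, v⟩ hx
        rw [Finset.mem_filter, Finset.mem_product] at hx ⊢
        obtain ⟨⟨hu, hv⟩, hW⟩ := hx
        rw [hmem] at hu hv
        have hu0 : u ≠ 0 := root_ne_zero hN0 hu
        have hv0 : v ≠ 0 := root_ne_zero hN0 hv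
        refine ⟨⟨?_, ?_⟩, ?_⟩
        · rw [hmem]
          show (u * v⁻¹) ^ N = 1
          rw [mul_pow, inv_pow, hu, hv]; norm_num
        · rw [hmem]; exact hu
        · show Whc (u * v⁻¹) u = r
          rw [whc_ghc hu0 hv0]; exact hW
      · rintro ⟨u, v⟩ hx
        rw [Finset.mem_filter, Finset.mem_product] at hx
        obtain ⟨⟨hu, hv⟩, hW⟩ := hx
        rw [hmem] at hu hv
        exact ghc_six (root_ne_zero hN0 hu) (root_ne_zero hN0 hv)
      · rintro ⟨u, v⟩ hx heq
        rw [Finset.mem_filter, Finset.mem_product] at hx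
        obtain ⟨⟨hu, hv⟩, hW⟩ := hx
        rw [hmem] at hu hv
        rcases ghc_sq_fix (root_ne_zero hN0 hu) (root_ne_zero hN0 hv) heq with h | h
        · exact hr9 (hW ▸ h)
        · exact hr0 (hW ▸ h)
      · rintro ⟨u, v⟩ hx heq
        rw [Finset.mem_filter, Finset.mem_product] at hx
        obtain ⟨⟨hu, hv⟩, hW⟩ := hx
        rw [hmem] at hu hv
        obtain ⟨hu1, hv1⟩ := ghc_cube_fix (root_ne_zero hN0 hu) (root_ne_zero hN0 hv) heq
        rcases hu1 with rfl | rfl <;> rcases hv1 with rfl | rfl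
        · rw [whc_11] at hW; exact hr9 hW.symm
        · rw [whc_1m] at hW; exact hr1 hW.symm
        · rw [whc_m1] at hW; exact hr1 hW.symm
        · rw [whc_mm] at hW; exact hr1 hW.symm
    exact (Nat.modEq_zero_iff_dvd).mpr hdvd
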